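/- arXiv:1608.04273 — 4 statements merged into one kernel-verified Lean document; each statement's English description precedes it below -/
import Mathlib

section
/- For every real parameter x > 1 and every truthful deterministic mechanism f for the 2×2 instance family (a map assigning to every reported edge set E ⊆ I×J a matching f(E) contained in E, such that for every bin i, every edge set E, and every E'_i ⊆ E_i, the value bin i receives from f(E) is at least the value it receives from f(E'_i ∪ E_{−i})), there exists an edge set E ⊆ I×J such that the total value of f(E) is at most x while some matching contained in E has total value x + 1. Consequently, for every constant c < 2, choosing x ∈ (1, 1/(c−1)) shows that no truthful deterministic mechanism attains total value at least (1/c) times the optimal total value on every instance of the family; i.e., no truthful deterministic mechanism has approximation ratio better than 2. -/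
/-!
The 2×2 instance family with parameter `x > 1`: bins `I = Fin 2` of capacity 1,
items `J = Fin 2` (item `0` is A, item `1` is B), all sizes 1, values
`v i A = 1` and `v i B = x` for both bins `i`.
-/

/-- Value of item `j` (item `1` = B has value `x`, item `0` = A has value `1`). -/
def itemVal (x : ℝ) (j : Fin 2) : ℝ := if j = 1 then x else 1

/-- `M` is a matching contained in the edge set `E`: each bin appears in at most one
edge of `M` and each item appears in at most one edge of `M`. -/
def IsMatchingIn (M E : Finset (Fin 2 × Fin 2)) : Prop :=
  M ⊆ E ∧ (∀ i j j', (i, j) ∈ M → (i, j') ∈ M → j = j') ∧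
    (∀ i i' j, (i, j) ∈ M → (i', j) ∈ M → i = i')

/-- The value bin `i` receives from the matching `M`. -/
def binValue (x : ℝ) (M : Finset (Fin 2 × Fin 2)) (i : Fin 2) : ℝ :=
  ∑ j : Fin 2, if (i, j) ∈ M then itemVal x j else 0

/-- The total value of the matching `M`. -/
def totalValue (x : ℝ) (M : Finset (Fin 2 × Fin 2)) : ℝ :=
  ∑ i : Fin 2, binValue x M i

/-- The edges of `E` incident on bin `i`. -/
def binEdges (E : Finset (Fin 2 × Fin 2)) (i : Fin 2) : Finset (Fin 2 × Fin 2) :=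
  E.filter (fun e => e.1 = i)

/-- A deterministic mechanism `f` is truthful if no bin `i` can increase the value it
receives by reporting a subset `E'` of its true incident edges `E_i` instead of `E_i`. -/
def Truthful (x : ℝ) (f : Finset (Fin 2 × Fin 2) → Finset (Fin 2 × Fin 2)) : Prop :=
  ∀ (i : Fin 2) (E E' : Finset (Fin 2 × Fin 2)), E' ⊆ binEdges E i →
    binValue x (f (E' ∪ (E \ binEdges E i))) i ≤ binValue x (f E) i

instance (M E : Finset (Fin 2 × Fin 2)) : Decidable (IsMatchingIn M E) := by
  unfold IsMatchingIn; infer_instance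

lemma binValue_eq (x : ℝ) (M : Finset (Fin 2 × Fin 2)) (i : Fin 2) :
    binValue x M i = (if (i, (0:Fin 2)) ∈ M then 1 else 0) +
      (if (i, (1:Fin 2)) ∈ M then x else 0) := by
  simp [binValue, Fin.sum_univ_two, itemVal]

lemma totalValue_eq (x : ℝ) (M : Finset (Fin 2 × Fin 2)) :
    totalValue x M = ((if ((0:Fin 2), (0:Fin 2)) ∈ M then 1 else 0) +
      (if ((0:Fin 2), (1:Fin 2)) ∈ M then x else 0)) +
      ((if ((1:Fin 2), (0:Fin 2)) ∈ M then 1 else 0) +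
      (if ((1:Fin 2), (1:Fin 2)) ∈ M then x else 0)) := by
  simp [totalValue, Fin.sum_univ_two, binValue_eq]

lemma valM1 (x : ℝ) :
    totalValue x ({(0, 1), (1, 0)} : Finset (Fin 2 × Fin 2)) = x + 1 := by
  rw [totalValue_eq, if_neg (by decide), if_pos (by decide : ((0:Fin 2),(1:Fin 2)) ∈
    ({(0, 1), (1, 0)} : Finset (Fin 2 × Fin 2))), if_pos (by decide :
    ((1:Fin 2),(0:Fin 2)) ∈ ({(0, 1), (1, 0)} : Finset (Fin 2 × Fin 2))),
    if_neg (by decide)]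
  ring

lemma valM2 (x : ℝ) :
    totalValue x ({(0, 0), (1, 1)} : Finset (Fin 2 × Fin 2)) = x + 1 := by
  rw [totalValue_eq, if_pos (by decide : ((0:Fin 2),(0:Fin 2)) ∈
    ({(0, 0), (1, 1)} : Finset (Fin 2 × Fin 2))), if_neg (by decide),
    if_neg (by decide), if_pos (by decide : ((1:Fin 2),(1:Fin 2)) ∈
    ({(0, 0), (1, 1)} : Finset (Fin 2 × Fin 2)))]
  ring

lemma key (x : ℝ) (hx : 1 < x)
    (f : Finset (Fin 2 × Fin 2) → Finset (Fin 2 × Fin 2))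
    (hf : ∀ E, IsMatchingIn (f E) E) (ht : Truthful x f) :
    ∃ E : Finset (Fin 2 × Fin 2),
      totalValue x (f E) ≤ x ∧
      ∃ M, IsMatchingIn M E ∧ totalValue x M = x + 1 := by
  obtain ⟨hsub, hj, hi⟩ := hf {(0, 0), (0, 1), (1, 0), (1, 1)}
  by_cases hA : ((0:Fin 2), (0:Fin 2)) ∈ f {(0, 0), (0, 1), (1, 0), (1, 1)} ∧
      ((1:Fin 2), (1:Fin 2)) ∈ f {(0, 0), (0, 1), (1, 0), (1, 1)}
  · -- bin 0 got item A (value 1); it drops its A-edge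
    obtain ⟨h00, h11⟩ := hA
    have h01 : ((0:Fin 2), (1:Fin 2)) ∉ f {(0, 0), (0, 1), (1, 0), (1, 1)} := fun h =>
      absurd (hj 0 0 1 h00 h) (by decide)
    have htr := ht 0 {(0, 0), (0, 1), (1, 0), (1, 1)} {((0:Fin 2), (1:Fin 2))} (by decide)
    rw [(by decide : ({((0:Fin 2), (1:Fin 2))} : Finset (Fin 2 × Fin 2)) ∪
        (({(0, 0), (0, 1), (1, 0), (1, 1)} : Finset (Fin 2 × Fin 2)) \
          binEdges {(0, 0), (0, 1), (1, 0), (1, 1)} 0) = {(0, 1), (1, 0), (1, 1)})] at htr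
    have hb0 : binValue x (f {(0, 0), (0, 1), (1, 0), (1, 1)}) 0 = 1 := by
      rw [binValue_eq, if_pos h00, if_neg h01]; ring
    rw [hb0] at htr
    obtain ⟨hsub2, hj2, hi2⟩ := hf {(0, 1), (1, 0), (1, 1)}
    have h200 : ((0:Fin 2), (0:Fin 2)) ∉ f {(0, 1), (1, 0), (1, 1)} := fun h =>
      absurd (hsub2 h) (by decide)
    have h201 : ((0:Fin 2), (1:Fin 2)) ∉ f {(0, 1), (1, 0), (1, 1)} := by
      intro h
      rw [binValue_eq, if_neg h200, if_pos h] at htr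
      linarith
    refine ⟨{(0, 1), (1, 0), (1, 1)}, ?_, {(0, 1), (1, 0)}, by decide, valM1 x⟩
    rw [totalValue_eq, if_neg h200, if_neg h201]
    split_ifs with h210 h211 h211
    · exact absurd (hj2 1 0 1 h210 h211) (by decide)
    all_goals linarith
  · by_cases hB : ((0:Fin 2), (1:Fin 2)) ∈ f {(0, 0), (0, 1), (1, 0), (1, 1)} ∧
        ((1:Fin 2), (0:Fin 2)) ∈ f {(0, 0), (0, 1), (1, 0), (1, 1)}
    · -- bin 1 got item A (value 1); it drops its A-edge
      obtain ⟨h01, h10⟩ := hB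
      have h11 : ((1:Fin 2), (1:Fin 2)) ∉ f {(0, 0), (0, 1), (1, 0), (1, 1)} := fun h =>
        absurd (hj 1 0 1 h10 h) (by decide)
      have htr := ht 1 {(0, 0), (0, 1), (1, 0), (1, 1)} {((1:Fin 2), (1:Fin 2))} (by decide)
      rw [(by decide : ({((1:Fin 2), (1:Fin 2))} : Finset (Fin 2 × Fin 2)) ∪
          (({(0, 0), (0, 1), (1, 0), (1, 1)} : Finset (Fin 2 × Fin 2)) \
            binEdges {(0, 0), (0, 1), (1, 0), (1, 1)} 1) = {(0, 0), (0, 1), (1, 1)})] at htr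
      have hb1 : binValue x (f {(0, 0), (0, 1), (1, 0), (1, 1)}) 1 = 1 := by
        rw [binValue_eq, if_pos h10, if_neg h11]; ring
      rw [hb1] at htr
      obtain ⟨hsub2, hj2, hi2⟩ := hf {(0, 0), (0, 1), (1, 1)}
      have h210 : ((1:Fin 2), (0:Fin 2)) ∉ f {(0, 0), (0, 1), (1, 1)} := fun h =>
        absurd (hsub2 h) (by decide)
      have h211 : ((1:Fin 2), (1:Fin 2)) ∉ f {(0, 0), (0, 1), (1, 1)} := by
        intro h
        rw [binValue_eq, if_neg h210, if_pos h] at htr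
        linarith
      refine ⟨{(0, 0), (0, 1), (1, 1)}, ?_, {(0, 0), (1, 1)}, by decide, valM2 x⟩
      rw [totalValue_eq, if_neg h210, if_neg h211]
      split_ifs with h200 h201 h201
      · exact absurd (hj2 0 0 1 h200 h201) (by decide)
      all_goals linarith
    · -- f on the full instance is not a perfect matching: at most one edge
      refine ⟨{(0, 0), (0, 1), (1, 0), (1, 1)}, ?_, {(0, 1), (1, 0)}, by decide, valM1 x⟩
      rw [totalValue_eq]
      split_ifs with h00 h01 h10 h11 <;> first
        | exact absurd (hj 0 0 1 ‹_› ‹_›) (by decide)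
        | exact absurd (hi 0 1 0 ‹_› ‹_›) (by decide)
        | exact absurd (hi 0 1 1 ‹_› ‹_›) (by decide)
        | exact absurd (hj 1 0 1 ‹_› ‹_›) (by decide)
        | exact absurd ⟨‹_›, ‹_›⟩ hA
        | exact absurd ⟨‹_›, ‹_›⟩ hB
        | linarith

/-- every truthful deterministic mechanism for the 2×2 family has an
instance where it gets at most `x` while the optimum is `x + 1`; consequently no
truthful deterministic mechanism has approximation ratio better than 2. -/
theorem deterministic_lower_bound :
    (∀ x : ℝ, 1 < x →
      ∀ f : Finset (Fin 2 × Fin 2) → Finset (Fin 2 × Fin 2),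
        (∀ E, IsMatchingIn (f E) E) → Truthful x f →
        ∃ E : Finset (Fin 2 × Fin 2),
          totalValue x (f E) ≤ x ∧
          ∃ M, IsMatchingIn M E ∧ totalValue x M = x + 1)
    ∧
    (∀ c : ℝ, c < 2 → ∀ x : ℝ, 1 < x → x < 1 / (c - 1) →
      ¬ ∃ f : Finset (Fin 2 × Fin 2) → Finset (Fin 2 × Fin 2),
          (∀ E, IsMatchingIn (f E) E) ∧ Truthful x f ∧
          ∀ E M, IsMatchingIn M E → totalValue x M ≤ c * totalValue x (f E)) := by
  refine ⟨fun x hx f hf ht => key x hx f hf ht, ?_⟩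
  intro c hc x hx hxc ⟨f, hf, ht, happrox⟩
  obtain ⟨E, hle, M, hM, hMval⟩ := key x hx f hf ht
  have hc1 : 1 < c := by
    by_contra h
    push_neg at h
    have : 1 / (c - 1) ≤ 0 := by
      rcases eq_or_lt_of_le h with h' | h'
      · simp [← h']
      · exact le_of_lt (div_neg_of_pos_of_neg one_pos (by linarith))
    linarith
  have hx' : x * (c - 1) < 1 := by
    have := (lt_div_iff₀ (by linarith : (0:ℝ) < c - 1)).mp hxc
    linarith
  have h1 := happrox E M hM
  rw [hMval] at h1
  have h2 : c * totalValue x (f E) ≤ c * x :=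
    mul_le_mul_of_nonneg_left hle (by linarith)
  nlinarith
end

section
/- For every real parameter x > 1 and every truthful-in-expectation randomized mechanism μ for the 2×2 instance family (a map assigning to every reported edge set E ⊆ I×J a finitely supported probability distribution μ(E) over matchings contained in E, such that for every bin i, every edge set E, and every E'_i ⊆ E_i, the expected value bin i receives under μ(E) is at least its expected value under μ(E'_i ∪ E_{−i})), there exists an edge set E ⊆ I×J such that some matching contained in E has total value x + 1 while the expected total value under μ(E) is at most x + (x+1)/(2x). In particular, taking x = 1 + √2, no truthful-in-expectation randomized mechanism has approximation ratio better than 1 + 1/(4√2 + 5) (≈ 1.094) on this family. -/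
/-- `μ` is a probability distribution over matchings contained in `E`. -/
def IsDistOverMatchings (E : Finset (Fin 2 × Fin 2))
    (μ : Finset (Fin 2 × Fin 2) → ℝ) : Prop :=
  (∀ M, 0 ≤ μ M) ∧ (∑ M : Finset (Fin 2 × Fin 2), μ M = 1) ∧
    (∀ M, μ M ≠ 0 → IsMatchingIn M E)

/-- Expected value of bin `i` under the distribution `μ` over matchings. -/
def expBinValue (x : ℝ) (μ : Finset (Fin 2 × Fin 2) → ℝ) (i : Fin 2) : ℝ :=
  ∑ M : Finset (Fin 2 × Fin 2), μ M * binValue x M i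

/-- Expected total value under the distribution `μ` over matchings. -/
def expTotalValue (x : ℝ) (μ : Finset (Fin 2 × Fin 2) → ℝ) : ℝ :=
  ∑ M : Finset (Fin 2 × Fin 2), μ M * totalValue x M

/-- A randomized mechanism `μ` is truthful in expectation if no bin `i` can increase its
expected value by reporting a subset `E'` of its true incident edges `E_i`. -/
def TruthfulInExpectation (x : ℝ)
    (μ : Finset (Fin 2 × Fin 2) → Finset (Fin 2 × Fin 2) → ℝ) : Prop :=
  ∀ (i : Fin 2) (E E' : Finset (Fin 2 × Fin 2)), E' ⊆ binEdges E i →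
    expBinValue x (μ (E' ∪ (E \ binEdges E i))) i ≤ expBinValue x (μ E) i

instance inst_s1 (M E : Finset (Fin 2 × Fin 2)) : Decidable (IsMatchingIn M E) := by
  unfold IsMatchingIn; exact instDecidableAnd

lemma totalValue_expand (x : ℝ) (M : Finset (Fin 2 × Fin 2)) :
    totalValue x M = (if ((0:Fin 2),(0:Fin 2)) ∈ M then (1:ℝ) else 0)
      + (if ((0:Fin 2),(1:Fin 2)) ∈ M then x else 0)
      + ((if ((1:Fin 2),(0:Fin 2)) ∈ M then (1:ℝ) else 0)
      + (if ((1:Fin 2),(1:Fin 2)) ∈ M then x else 0)) := by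
  simp [totalValue, binValue, itemVal, Fin.sum_univ_two]

lemma matching_total_le {x : ℝ} (hx : 1 ≤ x) {M E : Finset (Fin 2 × Fin 2)}
    (hM : IsMatchingIn M E) : totalValue x M ≤ x + 1 := by
  obtain ⟨-, hrow, hcol⟩ := hM
  rw [totalValue_expand]
  split_ifs <;>
    first
      | linarith
      | exact absurd (hcol 0 1 1 ‹_› ‹_›) (by decide)
      | exact absurd (hcol 0 1 0 ‹_› ‹_›) (by decide)

/-- If bin `i` gets nothing in a matching, total ≤ x. -/
lemma matching_total_le_of_empty_bin {x : ℝ} (hx : 1 ≤ x) {M E : Finset (Fin 2 × Fin 2)}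
    (hM : IsMatchingIn M E) (i : Fin 2)
    (h0 : (i, 0) ∉ M) (h1 : (i, 1) ∉ M) : totalValue x M ≤ x := by
  obtain ⟨-, hrow, -⟩ := hM
  rw [totalValue_expand]
  fin_cases i <;>
    simp only at h0 h1 <;>
    split_ifs <;>
      first
        | linarith
        | exact absurd ‹_› h0
        | exact absurd ‹_› h1
        | exact absurd (hrow 0 0 1 ‹_› ‹_›) (by decide)
        | exact absurd (hrow 1 0 1 ‹_› ‹_›) (by decide)

lemma totalValue_nonneg {x : ℝ} (hx : 0 ≤ x) (M : Finset (Fin 2 × Fin 2)) :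
    0 ≤ totalValue x M := by
  rw [totalValue_expand]
  split_ifs <;> linarith

lemma expTotal_eq_sum (x : ℝ) (ν : Finset (Fin 2 × Fin 2) → ℝ) :
    expTotalValue x ν = ∑ i : Fin 2, expBinValue x ν i := by
  unfold expTotalValue expBinValue totalValue
  simp_rw [Finset.mul_sum]
  rw [Finset.sum_comm]

lemma expTotal_le {x : ℝ} (hx : 1 ≤ x) {E : Finset (Fin 2 × Fin 2)}
    {ν : Finset (Fin 2 × Fin 2) → ℝ} (hν : IsDistOverMatchings E ν) :
    expTotalValue x ν ≤ x + 1 := by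
  obtain ⟨hn, hs, hm⟩ := hν
  calc expTotalValue x ν ≤ ∑ M : Finset (Fin 2 × Fin 2), ν M * (x + 1) := by
        refine Finset.sum_le_sum fun M _ => ?_
        by_cases h : ν M = 0
        · simp [h]
        · exact mul_le_mul_of_nonneg_left (matching_total_le hx (hm M h)) (hn M)
    _ = x + 1 := by rw [← Finset.sum_mul, hs, one_mul]

lemma expTotal_nonneg {x : ℝ} (hx : 0 ≤ x) {E : Finset (Fin 2 × Fin 2)}
    {ν : Finset (Fin 2 × Fin 2) → ℝ} (hν : IsDistOverMatchings E ν) :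
    0 ≤ expTotalValue x ν :=
  Finset.sum_nonneg fun M _ => mul_nonneg (hν.1 M) (totalValue_nonneg hx M)

/-- The deviated edge set: bin `i` reports only its B-edge. -/
def Dset (i : Fin 2) : Finset (Fin 2 × Fin 2) :=
  {(i, 1)} ∪ ((Finset.univ : Finset (Fin 2 × Fin 2)) \ binEdges Finset.univ i)

lemma notMem_Dset (i : Fin 2) : (i, 0) ∉ Dset i := by
  fin_cases i <;> decide

theorem main_part1 (x : ℝ) (hx : 1 < x)
    (μ : Finset (Fin 2 × Fin 2) → Finset (Fin 2 × Fin 2) → ℝ)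
    (hdist : ∀ E, IsDistOverMatchings E (μ E)) (htr : TruthfulInExpectation x μ) :
    ∃ E : Finset (Fin 2 × Fin 2),
      (∃ M, IsMatchingIn M E ∧ totalValue x M = x + 1) ∧
      expTotalValue x (μ E) ≤ x + (x + 1) / (2 * x) := by
  have hx1 : (1:ℝ) ≤ x := le_of_lt hx
  -- probability that bin i gets item B in the deviated instance
  set r : Fin 2 → ℝ := fun i =>
    ∑ M : Finset (Fin 2 × Fin 2), μ (Dset i) M * (if (i, 1) ∈ M then (1:ℝ) else 0) with hr
  -- expected value of bin i under its deviation
  have hbin : ∀ i, expBinValue x (μ (Dset i)) i = x * r i := by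
    intro i
    rw [hr]
    unfold expBinValue
    rw [Finset.mul_sum]
    refine Finset.sum_congr rfl fun M _ => ?_
    by_cases h : μ (Dset i) M = 0
    · simp [h]
    · have hsub := ((hdist (Dset i)).2.2 M h).1
      have h0 : (i, 0) ∉ M := fun hm => notMem_Dset i (hsub hm)
      simp only [binValue, itemVal, Fin.sum_univ_two]
      simp [h0]
      split_ifs <;> ring
  -- truthfulness: x * r i ≤ expBinValue under truthful univ report
  have htruth : ∀ i, x * r i ≤ expBinValue x (μ Finset.univ) i := by
    intro i
    rw [← hbin i]
    have hsub : ({(i, 1)} : Finset (Fin 2 × Fin 2)) ⊆ binEdges Finset.univ i := by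
      intro e he
      simp only [Finset.mem_singleton] at he
      subst he
      simp [binEdges]
    exact htr i Finset.univ {(i, 1)} hsub
  -- sum bound
  have hsum : x * (r 0 + r 1) ≤ x + 1 := by
    have h1 : x * r 0 + x * r 1 ≤ expTotalValue x (μ Finset.univ) := by
      rw [expTotal_eq_sum, Fin.sum_univ_two]
      exact add_le_add (htruth 0) (htruth 1)
    have h2 := expTotal_le hx1 (hdist Finset.univ)
    nlinarith
  -- exp total under deviation bounded by x + r i
  have hdev : ∀ i, expTotalValue x (μ (Dset i)) ≤ x + r i := by
    intro i
    rw [hr]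
    unfold expTotalValue
    calc ∑ M : Finset (Fin 2 × Fin 2), μ (Dset i) M * totalValue x M
        ≤ ∑ M : Finset (Fin 2 × Fin 2),
            (μ (Dset i) M * x + μ (Dset i) M * (if (i, 1) ∈ M then (1:ℝ) else 0)) := by
          refine Finset.sum_le_sum fun M _ => ?_
          by_cases h : μ (Dset i) M = 0
          · simp [h]
          · have hM := (hdist (Dset i)).2.2 M h
            have hn := (hdist (Dset i)).1 M
            by_cases h1 : (i, 1) ∈ M
            · have := matching_total_le hx1 hM
              rw [if_pos h1]
              nlinarith
            · have h0 : (i, 0) ∉ M := fun hm => notMem_Dset i (hM.1 hm)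
              have := matching_total_le_of_empty_bin hx1 hM i h0 h1
              rw [if_neg h1]
              nlinarith
      _ = x + ∑ M : Finset (Fin 2 × Fin 2),
            μ (Dset i) M * (if (i, 1) ∈ M then (1:ℝ) else 0) := by
          rw [Finset.sum_add_distrib, ← Finset.sum_mul, (hdist (Dset i)).2.1, one_mul]
  have hxpos : (0:ℝ) < x := by linarith
  have bound : ∀ a b : ℝ, a ≤ b → x * (a + b) ≤ x + 1 → a ≤ (x + 1) / (2 * x) := by
    intro a b hab hs
    rw [le_div_iff₀ (by linarith : (0:ℝ) < 2 * x)]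
    nlinarith [mul_nonneg hxpos.le (sub_nonneg.2 hab)]
  rcases le_total (r 0) (r 1) with h | h
  · refine ⟨Dset 0, ⟨{(0, 1), (1, 0)}, by decide, ?_⟩, ?_⟩
    · rw [totalValue_expand]
      norm_num [Prod.ext_iff]
    · have := bound (r 0) (r 1) h hsum
      calc expTotalValue x (μ (Dset 0)) ≤ x + r 0 := hdev 0
        _ ≤ x + (x + 1) / (2 * x) := by linarith
  · refine ⟨Dset 1, ⟨{(1, 1), (0, 0)}, by decide, ?_⟩, ?_⟩
    · rw [totalValue_expand]
      norm_num [Prod.ext_iff]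
      ring
    · have := bound (r 1) (r 0) h (by rw [add_comm]; exact hsum)
      calc expTotalValue x (μ (Dset 1)) ≤ x + r 1 := hdev 1
        _ ≤ x + (x + 1) / (2 * x) := by linarith

theorem main_part2 (c : ℝ) (hc : c < 1 + 1 / (4 * Real.sqrt 2 + 5)) :
    ¬ ∃ μ : Finset (Fin 2 × Fin 2) → Finset (Fin 2 × Fin 2) → ℝ,
        (∀ E, IsDistOverMatchings E (μ E)) ∧
        TruthfulInExpectation (1 + Real.sqrt 2) μ ∧
        ∀ E M, IsMatchingIn M E →
          totalValue (1 + Real.sqrt 2) M ≤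
            c * expTotalValue (1 + Real.sqrt 2) (μ E) := by
  rintro ⟨μ, hdist, htr, happ⟩
  have hs2 : Real.sqrt 2 ^ 2 = 2 := Real.sq_sqrt (by norm_num)
  have hs1 : 1 < Real.sqrt 2 := by nlinarith [Real.sqrt_nonneg 2]
  set s := Real.sqrt 2 with hsdef
  set x : ℝ := 1 + s with hxdef
  have hx : 1 < x := by rw [hxdef]; linarith
  obtain ⟨E, ⟨M, hM, hMv⟩, hB⟩ := main_part1 x hx μ hdist htr
  have h1 : x + 1 ≤ c * expTotalValue x (μ E) := hMv ▸ happ E M hM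
  have hT0 : 0 ≤ expTotalValue x (μ E) := expTotal_nonneg (by linarith) (hdist E)
  have hkey : (1 + 1/(4*s+5)) * (x + (x+1)/(2*x)) = x + 1 := by
    rw [hxdef]
    have h1 : (4*s+5) ≠ 0 := by positivity
    have h2 : (2*(1+s)) ≠ 0 := by positivity
    field_simp
    ring_nf
    nlinarith [hs2]
  rcases le_or_gt c 0 with h | h
  · nlinarith [mul_nonpos_of_nonpos_of_nonneg h hT0]
  · have hBpos : 0 < x + (x + 1) / (2 * x) := by
      have : 0 < (x + 1) / (2 * x) := by positivity
      linarith
    have h2 : c * expTotalValue x (μ E) ≤ c * (x + (x + 1) / (2 * x)) :=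
      mul_le_mul_of_nonneg_left hB h.le
    have h3 : c * (x + (x + 1) / (2 * x)) < (1 + 1/(4*s+5)) * (x + (x + 1) / (2 * x)) :=
      mul_lt_mul_of_pos_right hc hBpos
    linarith [hkey ▸ h3]

/-- every truthful-in-expectation randomized mechanism for the 2×2 family
has an instance where its expected total value is at most `x + (x+1)/(2x)` while the
optimum is `x + 1`; in particular (taking `x = 1 + √2`) no such mechanism has
approximation ratio better than `1 + 1/(4√2 + 5)`. -/
theorem randomized_lower_bound :
    (∀ x : ℝ, 1 < x →
      ∀ μ : Finset (Fin 2 × Fin 2) → Finset (Fin 2 × Fin 2) → ℝ,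
        (∀ E, IsDistOverMatchings E (μ E)) → TruthfulInExpectation x μ →
        ∃ E : Finset (Fin 2 × Fin 2),
          (∃ M, IsMatchingIn M E ∧ totalValue x M = x + 1) ∧
          expTotalValue x (μ E) ≤ x + (x + 1) / (2 * x))
    ∧
    (∀ c : ℝ, c < 1 + 1 / (4 * Real.sqrt 2 + 5) →
      ¬ ∃ μ : Finset (Fin 2 × Fin 2) → Finset (Fin 2 × Fin 2) → ℝ,
          (∀ E, IsDistOverMatchings E (μ E)) ∧
          TruthfulInExpectation (1 + Real.sqrt 2) μ ∧
          ∀ E M, IsMatchingIn M E →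
            totalValue (1 + Real.sqrt 2) M ≤
              c * expTotalValue (1 + Real.sqrt 2) (μ E)) := by
  exact ⟨main_part1, main_part2⟩
end

section
/- For every real x > 1, the quantity (x+1)/(x + (x+1)/(2x)) is at most 1 + 1/(4√2 + 5), and equality holds when x = 1 + √2. -/
/-- for every real `x > 1`, the ratio `(x+1)/(x + (x+1)/(2x))` is at most
`1 + 1/(4√2 + 5)`, with equality when `x = 1 + √2`. -/
theorem ratio_optimization (x : ℝ) (hx : 1 < x) :
    (x + 1) / (x + (x + 1) / (2 * x)) ≤ 1 + 1 / (4 * Real.sqrt 2 + 5) ∧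
    (x = 1 + Real.sqrt 2 →
      (x + 1) / (x + (x + 1) / (2 * x)) = 1 + 1 / (4 * Real.sqrt 2 + 5)) := by
  have hs2 : Real.sqrt 2 ^ 2 = 2 := Real.sq_sqrt (by norm_num)
  have hs0 : 0 < Real.sqrt 2 := Real.sqrt_pos.mpr (by norm_num)
  set s := Real.sqrt 2 with hs
  have hx0 : (0:ℝ) < x := by linarith
  have hx0' : (2*x) ≠ 0 := by positivity
  have hden : 0 < x + (x + 1) / (2 * x) := by positivity
  have h5 : (0:ℝ) < 4 * s + 5 := by positivity
  have key : (x + 1) / (x + (x + 1) / (2 * x)) = 2*x*(x+1) / (2*x^2 + x + 1) := by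
    rw [div_eq_div_iff (ne_of_gt hden) (by positivity)]
    field_simp
    ring
  have hden2 : (0:ℝ) < 2*x^2 + x + 1 := by positivity
  constructor
  · rw [key, div_le_iff₀ hden2]
    have h1 : (1:ℝ) + 1 / (4*s+5) = (4*s+6)/(4*s+5) := by
      field_simp
      ring
    rw [h1, div_mul_eq_mul_div, le_div_iff₀ h5]
    nlinarith [sq_nonneg (x - 1 - s), hs2, hx0.le, hs0.le]
  · intro hxs
    rw [key, hxs]
    rw [div_eq_iff (by nlinarith), eq_comm]
    field_simp
    nlinarith [hs2]
end

section
/- Theorem 2 (relaxation and rounding preserves truthfulness and loses a factor 2): fix finite sets I, J, values v_{ij} ≥ 0, sizes w_{ij} > 0, capacities C_i ≥ 0, and α ≥ 1. Suppose A^F assigns to every edge set E ⊆ I×J a feasible solution x(E) of LP[E] such that (fractional truthfulness) for every bin i, every E, and every E'_i ⊆ E_i: Σ_{j:(i,j)∈E} v_{ij} x(E)_{ij} ≥ Σ_{j:(i,j)∈E} v_{ij} x(E'_i ∪ E_{−i})_{ij}, and (α-approximation) for every E and every feasible solution y of LP[E]: Σ v_{ij} y_{ij} ≤ α · Σ v_{ij}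 x(E)_{ij}. Suppose moreover that for every E there is a finitely supported probability distribution λ^E over feasible integer ({0,1}-valued) solutions X^l of LP[E] with Σ_l λ^E_l X^l_{ij} = x(E)_{ij}/2 for all (i,j). Then the randomized mechanism that, on report E, samples X ∼ λ^E satisfies: (feasibility) every sampled X is a feasible integer solution of LP[E]; (truthfulness in expectation) for every bin i, E, and E'_i ⊆ E_i, E_{X∼λ^E}[Σ_{j:(i,j)∈E} v_{ij} X_{ij}] ≥ E_{X'∼λ^{E'_i∪E_{−i}}}[Σ_{j:(i,j)∈E} v_{ij} X'_{ij}]; and (2α-approximation) for every E and every feasible solution y of LP[E], Σ v_{ij} y_{ij} ≤ 2α · E_{X∼λ^E}[Σ v_{ij} X_{ij}]. -/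
/-- `z` is a feasible solution of LP[E]: nonnegative, supported on the edge set `E`,
each item assigned at most once in total, and each bin's capacity respected. -/
def LPFeasible {I J : Type*} [Fintype I] [Fintype J]
    (w : I → J → ℝ) (C : I → ℝ) (E : Finset (I × J)) (z : I → J → ℝ) : Prop :=
  (∀ i j, 0 ≤ z i j) ∧ (∀ i j, (i, j) ∉ E → z i j = 0) ∧
    (∀ j, ∑ i, z i j ≤ 1) ∧ (∀ i, ∑ j, w i j * z i j ≤ C i)

/-- The {0,1}-valued (integer) solution determined by the set `S` of chosen edges. -/
def intSol {I J : Type*} [DecidableEq I] [DecidableEq J]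
    (S : Finset (I × J)) : I → J → ℝ :=
  fun i j => if (i, j) ∈ S then 1 else 0

/-- Theorem 2: relaxation and rounding preserves truthfulness and loses a
factor 2: if `x` is a fractionally truthful `α`-approximation algorithm for LP[·], and
for every edge set `E` the scaled solution `x E / 2` decomposes as a convex combination
`lam E` of feasible integer solutions, then sampling from `lam E` yields a feasible,
truthful-in-expectation, `2α`-approximation randomized mechanism. -/
theorem relaxation_and_rounding
    {I J : Type*} [Fintype I] [Fintype J] [DecidableEq I] [DecidableEq J]
    (v w : I → J → ℝ) (C : I → ℝ) (α : ℝ)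
    (hv : ∀ i j, 0 ≤ v i j) (hw : ∀ i j, 0 < w i j) (hC : ∀ i, 0 ≤ C i) (hα : 1 ≤ α)
    -- the fractional algorithm A^F
    (x : Finset (I × J) → I → J → ℝ)
    (hfeas : ∀ E, LPFeasible w C E (x E))
    -- fractional truthfulness
    (htruth : ∀ (i : I) (E E' : Finset (I × J)), E' ⊆ E.filter (fun e => e.1 = i) →
      ∑ j ∈ Finset.univ.filter (fun j => (i, j) ∈ E),
          v i j * x (E' ∪ E.filter (fun e => e.1 ≠ i)) i j
        ≤ ∑ j ∈ Finset.univ.filter (fun j => (i, j) ∈ E), v i j * x E i j)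
    -- α-approximation
    (happrox : ∀ E y, LPFeasible w C E y →
      ∑ i, ∑ j, v i j * y i j ≤ α * ∑ i, ∑ j, v i j * x E i j)
    -- the convex decomposition of x E / 2 into feasible integer solutions
    (lam : Finset (I × J) → Finset (I × J) → ℝ)
    (hlam0 : ∀ E S, 0 ≤ lam E S)
    (hlam1 : ∀ E, ∑ S : Finset (I × J), lam E S = 1)
    (hlamsupp : ∀ E S, lam E S ≠ 0 → LPFeasible w C E (intSol S))
    (hlamdec : ∀ E i j, ∑ S : Finset (I × J), lam E S * intSol S i j = x E i j / 2) :
    -- feasibility: every sampled integer solution is feasible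
    (∀ E S, lam E S ≠ 0 → LPFeasible w C E (intSol S))
    ∧
    -- truthfulness in expectation
    (∀ (i : I) (E E' : Finset (I × J)), E' ⊆ E.filter (fun e => e.1 = i) →
      ∑ S : Finset (I × J), lam (E' ∪ E.filter (fun e => e.1 ≠ i)) S *
          (∑ j ∈ Finset.univ.filter (fun j => (i, j) ∈ E), v i j * intSol S i j)
        ≤ ∑ S : Finset (I × J), lam E S *
          (∑ j ∈ Finset.univ.filter (fun j => (i, j) ∈ E), v i j * intSol S i j))
    ∧
    -- 2α-approximation in expectation
    (∀ E y, LPFeasible w C E y →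
      ∑ i, ∑ j, v i j * y i j ≤
        2 * α * ∑ S : Finset (I × J), lam E S * (∑ i, ∑ j, v i j * intSol S i j)) := by
  have key : ∀ (E : Finset (I × J)) (i : I) (T : Finset J),
      ∑ S : Finset (I × J), lam E S * (∑ j ∈ T, v i j * intSol S i j)
        = ∑ j ∈ T, v i j * (x E i j / 2) := by
    intro E i T
    simp_rw [Finset.mul_sum]
    rw [Finset.sum_comm]
    refine Finset.sum_congr rfl fun j _ => ?_
    rw [← hlamdec E i j, Finset.mul_sum]
    refine Finset.sum_congr rfl fun S _ => ?_
    ring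
  refine ⟨hlamsupp, ?_, ?_⟩
  · intro i E E' hE'
    rw [key, key]
    have := htruth i E E' hE'
    simp only [← mul_div_assoc, ← Finset.sum_div]
    linarith
  · intro E y hy
    have hkey : ∑ S : Finset (I × J), lam E S * (∑ i, ∑ j, v i j * intSol S i j)
        = ∑ i, ∑ j, v i j * (x E i j / 2) := by
      simp_rw [Finset.mul_sum]
      rw [Finset.sum_comm]
      refine Finset.sum_congr rfl fun i _ => ?_
      have := key E i Finset.univ
      simp_rw [Finset.mul_sum] at this
      exact this
    rw [hkey]
    have h1 := happrox E y hy
    have h2 : ∑ i, ∑ j, v i j * (x E i j / 2) = (∑ i, ∑ j, v i j * x E i j) / 2 := by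
      simp only [← mul_div_assoc, ← Finset.sum_div]
    rw [h2]
    ring_nf
    linarith
end
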